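/- Let u, ψ be nonzero real numbers and let J⁽ᵃ⁾ = [[0, 0, 0], [−u², 2u, 0], [−uψ, ψ, 0]]. Then the vector (0, 0, 1) is an eigenvector of J⁽ᵃ⁾ with eigenvalue 0, and J⁽ᵃ⁾ is not diagonalizable over ℝ: the span of all real eigenvectors of J⁽ᵃ⁾ is a proper subspace of ℝ³ of dimension 2, so the advection system is only weakly hyperbolic. -/
import Mathlib

lemma adv_key (u ψ : ℝ) (hu : u ≠ 0) (hψ : ψ ≠ 0) (v : Fin 3 → ℝ) (μ : ℝ)
    (h : (!![0, 0, 0; -u ^ 2, 2 * u, 0; -u * ψ, ψ, 0] : Matrix (Fin 3) (Fin 3) ℝ).mulVec v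
      = μ • v) : v 0 = 0 := by
  have h0 := congrFun h 0
  have h1 := congrFun h 1
  have h2 := congrFun h 2
  simp [Matrix.mulVec, dotProduct, Fin.sum_univ_three] at h0 h1 h2
  rcases eq_or_ne μ 0 with rfl | hμ
  · have hv1 : v 1 = u * v 0 := by
      have hh : ψ * (v 1 - u * v 0) = 0 := by ring_nf; linarith [h2]
      have := (mul_eq_zero.mp hh).resolve_left hψ
      linarith
    have : u ^ 2 * v 0 = 0 := by rw [hv1] at h1; ring_nf at h1 ⊢; linarith
    exact (mul_eq_zero.mp this).resolve_left (pow_ne_zero 2 hu)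
  · exact h0.resolve_left hμ

/-- The advection Jacobian `J⁽ᵃ⁾ = [[0,0,0],[−u²,2u,0],[−uψ,ψ,0]]` (with `u ≠ 0`,
`ψ ≠ 0`) has `(0,0,1)` as an eigenvector with eigenvalue `0`, is not diagonalizable
over `ℝ`, and the span of all of its real eigenvectors is a proper subspace of `ℝ³`
of dimension `2` (weak hyperbolicity). -/
theorem advection_weakly_hyperbolic (u ψ : ℝ) (hu : u ≠ 0) (hψ : ψ ≠ 0) :
    ((!![0, 0, 0; -u ^ 2, 2 * u, 0; -u * ψ, ψ, 0] : Matrix (Fin 3) (Fin 3) ℝ).mulVec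
        ![0, 0, 1] = (0 : ℝ) • ![0, 0, 1] ∧ (![0, 0, 1] : Fin 3 → ℝ) ≠ 0) ∧
    (¬ ∃ S D : Matrix (Fin 3) (Fin 3) ℝ, IsUnit S ∧ D.IsDiag ∧
        (!![0, 0, 0; -u ^ 2, 2 * u, 0; -u * ψ, ψ, 0] : Matrix (Fin 3) (Fin 3) ℝ) =
          S * D * S⁻¹) ∧
    (Submodule.span ℝ {v : Fin 3 → ℝ | v ≠ 0 ∧ ∃ μ : ℝ,
        (!![0, 0, 0; -u ^ 2, 2 * u, 0; -u * ψ, ψ, 0] : Matrix (Fin 3) (Fin 3) ℝ).mulVec v =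
          μ • v} ≠ ⊤) ∧
    Module.finrank ℝ
      (Submodule.span ℝ {v : Fin 3 → ℝ | v ≠ 0 ∧ ∃ μ : ℝ,
        (!![0, 0, 0; -u ^ 2, 2 * u, 0; -u * ψ, ψ, 0] : Matrix (Fin 3) (Fin 3) ℝ).mulVec v =
          μ • v}) = 2 := by
  set M : Matrix (Fin 3) (Fin 3) ℝ := !![0, 0, 0; -u ^ 2, 2 * u, 0; -u * ψ, ψ, 0] with hM
  -- the projection onto coordinate 0
  set p : (Fin 3 → ℝ) →ₗ[ℝ] ℝ := LinearMap.proj 0 with hp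
  have hker : ∀ v : Fin 3 → ℝ, v ∈ LinearMap.ker p ↔ v 0 = 0 := fun v => Iff.rfl
  -- span of eigenvectors is contained in ker p
  have hle : Submodule.span ℝ {v : Fin 3 → ℝ | v ≠ 0 ∧ ∃ μ : ℝ, M.mulVec v = μ • v}
      ≤ LinearMap.ker p := by
    rw [Submodule.span_le]
    rintro v ⟨-, μ, hv⟩
    exact (hker v).mpr (adv_key u ψ hu hψ v μ hv)
  -- two independent eigenvectors
  have hw : M.mulVec ![0, 2 * u, ψ] = (2 * u) • ![0, 2 * u, ψ] := by
    funext i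
    fin_cases i <;>
      simp [hM, Matrix.mulVec, dotProduct, Fin.sum_univ_three] <;> ring
  have he : M.mulVec ![0, 0, 1] = (0 : ℝ) • ![0, 0, 1] := by
    funext i
    fin_cases i <;>
      simp [hM, Matrix.mulVec, dotProduct, Fin.sum_univ_three]
  have hwne : (![0, 2 * u, ψ] : Fin 3 → ℝ) ≠ 0 := by
    intro hc
    have := congrFun hc 2
    simp at this
    exact hψ this
  have hene : (![0, 0, 1] : Fin 3 → ℝ) ≠ 0 := by
    intro hc
    have := congrFun hc 2
    simp at this
  have hind : LinearIndependent ℝ ![(![0, 2 * u, ψ] : Fin 3 → ℝ), ![0, 0, 1]] := by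
    rw [linearIndependent_fin2]
    refine ⟨hene, fun a hc => ?_⟩
    have := congrFun hc 1
    simp at this
    exact hu this
  have hsub : Set.range ![(![0, 2 * u, ψ] : Fin 3 → ℝ), ![0, 0, 1]] ⊆
      {v : Fin 3 → ℝ | v ≠ 0 ∧ ∃ μ : ℝ, M.mulVec v = μ • v} := by
    rintro x ⟨i, rfl⟩
    fin_cases i
    · exact ⟨hwne, 2 * u, hw⟩
    · exact ⟨hene, 0, he⟩
  -- finrank of ker p is 2
  have hpsurj : Function.Surjective p := by
    intro c
    exact ⟨![c, 0, 0], rfl⟩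
  have hrk : Module.finrank ℝ (LinearMap.ker p) = 2 := by
    have h1 := LinearMap.finrank_range_add_finrank_ker p
    rw [LinearMap.range_eq_top.mpr hpsurj] at h1
    simp [Module.finrank_fin_fun] at h1
    omega
  have hfr : Module.finrank ℝ
      (Submodule.span ℝ {v : Fin 3 → ℝ | v ≠ 0 ∧ ∃ μ : ℝ, M.mulVec v = μ • v}) = 2 := by
    have hge : 2 ≤ Module.finrank ℝ
        (Submodule.span ℝ {v : Fin 3 → ℝ | v ≠ 0 ∧ ∃ μ : ℝ, M.mulVec v = μ • v}) := by
      have h2 : Module.finrank ℝ (Submodule.span ℝ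
          (Set.range ![(![0, 2 * u, ψ] : Fin 3 → ℝ), ![0, 0, 1]])) = 2 := by
        rw [finrank_span_eq_card hind]
        simp
      calc 2 = _ := h2.symm
        _ ≤ _ := Submodule.finrank_mono (Submodule.span_mono hsub)
    have hle2 : Module.finrank ℝ
        (Submodule.span ℝ {v : Fin 3 → ℝ | v ≠ 0 ∧ ∃ μ : ℝ, M.mulVec v = μ • v}) ≤ 2 := by
      calc _ ≤ Module.finrank ℝ (LinearMap.ker p) := Submodule.finrank_mono hle
        _ = 2 := hrk
    omega
  have hnetop : Submodule.span ℝ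
      {v : Fin 3 → ℝ | v ≠ 0 ∧ ∃ μ : ℝ, M.mulVec v = μ • v} ≠ ⊤ := by
    intro hc
    have : (![1, 0, 0] : Fin 3 → ℝ) ∈ LinearMap.ker p := hle (hc ▸ Submodule.mem_top)
    simp [hker] at this
  refine ⟨⟨he, hene⟩, ?_, hnetop, hfr⟩
  rintro ⟨S, D, hS, hD, hEq⟩
  have hdet : IsUnit S.det := (Matrix.isUnit_iff_isUnit_det S).mp hS
  have hMS : M * S = S * D := by
    rw [hEq, Matrix.mul_assoc, Matrix.mul_assoc, Matrix.nonsing_inv_mul S hdet, Matrix.mul_one]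
  -- each column of S is an eigenvector, hence has zero first entry
  have hcol : ∀ i, S 0 i = 0 := by
    intro i
    have hcv : M.mulVec (fun j => S j i) = D i i • (fun j => S j i) := by
      funext j
      have := congrFun (congrFun hMS j) i
      simp only [Matrix.mul_apply] at this
      simp only [Matrix.mulVec, dotProduct, Pi.smul_apply, smul_eq_mul]
      rw [this]
      rw [Finset.sum_eq_single i (fun k _ hk => by rw [hD hk, mul_zero])
        (by simp)]
      ring
    exact adv_key u ψ hu hψ _ _ hcv
  have : S.det = 0 := by
    apply Matrix.det_eq_zero_of_row_eq_zero 0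
    exact hcol
  rw [this] at hdet
  exact hdet.ne_zero rfl
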